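/- Consider a finite MDP with finite nonempty state set S, finite nonempty action set A, transition kernel P, bounded reward r : S×A → ℝ, and γ ∈ [0,1). Let τ > 0, α ∈ (0,1), set λ = (1−α)·τ, and let (π_k)_{k≥1} be a sequence of strictly positive policies and (V_k)_{k≥0} a sequence of functions S → ℝ. For k ≥ 1 define the error ε_k(s,a) = τ·ln π_{k+1}(a|s) + V_k(s) − (r(s,a) + α·τ·ln π_k(a|s) + γ·(PV_{k−1})(s,a)) and the moving average E_k = (1−α)·Σ_{j=1}^{k} α^{k−j}·ε_j. Let Q_*^λ : S×A → ℝ satisfy Q_*^λ(s,a) = r(s,a) + γ·Σ_{s'} P(s'|s,a)·λ·ln Σ_{a'} exp(Q_*^λ(s',a')/λ) for all (s,a), and for each k let Q_{π_k}^λ : S×A → ℝ satisfy Q_{π_k}^λ(s,a) = r(s,a) + γ·Σ_{s'} P(s'|s,a)·Σ_{a'} π_k(a'|s')·(Q_{π_k}^λ(s',a') − λ·ln π_k(a'|s')) for all (s,a). Then there exists a sequence of reals (u_k)_{k≥1} with lim_{k→∞} k·u_k = 0 such that for all k ≥ 1: ‖Q_*^λ − Q_{π_k}^λ‖_∞ ≤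 (2/(1−γ)^2)·( (1−γ)·Σ_{j=1}^{k} γ^{k−j}·‖E_j‖_∞ ) + u_k. -/

import Mathlib

namespace IQDP

lemma geom_aux (α : ℝ) : ∀ n : ℕ, (1 - α) * ∑ j ∈ Finset.Icc 1 n, α ^ (n - j) = 1 - α ^ n := by
  intro n
  induction n with
  | zero => simp
  | succ n ih =>
    rw [Finset.sum_Icc_succ_top (Nat.le_add_left 1 n)]
    have h : ∀ j ∈ Finset.Icc 1 n, α ^ (n + 1 - j) = α * α ^ (n - j) := by
      intro j hj
      rw [Finset.mem_Icc] at hj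
      rw [Nat.succ_sub hj.2, pow_succ]
      ring
    rw [Finset.sum_congr rfl h, ← Finset.mul_sum]
    simp only [Nat.sub_self, pow_zero]
    have : (1 - α) * (α * ∑ j ∈ Finset.Icc 1 n, α ^ (n - j) + 1)
        = α * ((1 - α) * ∑ j ∈ Finset.Icc 1 n, α ^ (n - j)) + (1 - α) := by ring
    rw [this, ih]
    ring

lemma shift_aux (α : ℝ) (W : ℕ → ℝ) (n : ℕ) :
    ∑ j ∈ Finset.Icc 1 (n + 1), α ^ (n + 1 - j) * W (j - 1)
      = α ^ n * W 0 + ∑ j ∈ Finset.Icc 1 n, α ^ (n - j) * W j := by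
  rw [← Finset.Ico_add_one_right_eq_Icc, ← Finset.Ico_add_one_right_eq_Icc, Finset.sum_Ico_eq_sum_range,
    Finset.sum_Ico_eq_sum_range]
  have e1 : n + 1 + 1 - 1 = (n + 1 - 1) + 1 := by omega
  rw [e1, Finset.sum_range_succ']
  simp only [Nat.add_sub_cancel]
  rw [add_comm]
  congr 1
  apply Finset.sum_congr rfl
  intro i hi
  have e2 : n + 1 - (1 + (i + 1)) = n - (1 + i) := by omega
  have e3 : 1 + (i + 1) - 1 = 1 + i := by omega
  rw [e2, e3]

lemma sum_succ_aux (γ : ℝ) (x : ℕ → ℝ) (k : ℕ) :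
    ∑ j ∈ Finset.Icc 1 (k + 1), γ ^ (k + 1 - j) * x j
      = γ * (∑ j ∈ Finset.Icc 1 k, γ ^ (k - j) * x j) + x (k + 1) := by
  rw [Finset.sum_Icc_succ_top (Nat.le_add_left 1 k)]
  have h : ∀ j ∈ Finset.Icc 1 k, γ ^ (k + 1 - j) * x j = γ * (γ ^ (k - j) * x j) := by
    intro j hj
    rw [Finset.mem_Icc] at hj
    rw [Nat.succ_sub hj.2, pow_succ]
    ring
  rw [Finset.sum_congr rfl h, ← Finset.mul_sum]
  simp

lemma lse_le {lam : ℝ} (hlam : 0 < lam) {ι : Type*} [Fintype ι] [Nonempty ι]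
    (f g : ι → ℝ) (c : ℝ) (h : ∀ i, f i ≤ g i + c) :
    lam * Real.log (∑ i, Real.exp (f i / lam)) ≤
      lam * Real.log (∑ i, Real.exp (g i / lam)) + c := by
  have hpos : (0:ℝ) < ∑ i, Real.exp (g i / lam) :=
    Finset.sum_pos (fun i _ => Real.exp_pos _) Finset.univ_nonempty
  have hle : ∑ i, Real.exp (f i / lam) ≤ Real.exp (c / lam) * ∑ i, Real.exp (g i / lam) := by
    rw [Finset.mul_sum]
    refine Finset.sum_le_sum (fun i _ => ?_)
    rw [← Real.exp_add]
    apply Real.exp_le_exp.mpr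
    rw [← add_div]
    gcongr
    linarith [h i]
  have hl := Real.log_le_log (Finset.sum_pos (fun i _ => Real.exp_pos _) Finset.univ_nonempty) hle
  rw [Real.log_mul (Real.exp_ne_zero _) (ne_of_gt hpos), Real.log_exp] at hl
  calc lam * Real.log (∑ i, Real.exp (f i / lam))
      ≤ lam * (c / lam + Real.log (∑ i, Real.exp (g i / lam))) :=
        mul_le_mul_of_nonneg_left hl (le_of_lt hlam)
    _ = lam * Real.log (∑ i, Real.exp (g i / lam)) + c := by field_simp; ring

end IQDP

set_option maxHeartbeats 1000000 in
theorem iq_dp_error_propagation_general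
    {S A : Type*} [Fintype S] [Fintype A] [Nonempty S] [Nonempty A]
    (P : S → A → S → ℝ) (hP0 : ∀ s a s', 0 ≤ P s a s')
    (hPsum : ∀ s a, ∑ s', P s a s' = 1)
    (r : S → A → ℝ) (γ : ℝ) (hγ0 : 0 ≤ γ) (hγ1 : γ < 1)
    (τ α : ℝ) (hτ : 0 < τ) (hα0 : 0 < α) (hα1 : α < 1)
    (lam : ℝ) (hlam : lam = (1 - α) * τ)
    (π : ℕ → S → A → ℝ)
    (hπpos : ∀ k ≥ 1, ∀ s a, 0 < π k s a)
    (hπsum : ∀ k ≥ 1, ∀ s, ∑ a, π k s a = 1)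
    (V : ℕ → S → ℝ)
    (ε : ℕ → S × A → ℝ)
    (hε : ∀ k ≥ 1, ∀ s a, ε k (s, a) =
      τ * Real.log (π (k + 1) s a) + V k s -
        (r s a + α * τ * Real.log (π k s a) + γ * ∑ s', P s a s' * V (k - 1) s'))
    (E : ℕ → S × A → ℝ)
    (hE : ∀ k, E k = (1 - α) • ∑ j ∈ Finset.Icc 1 k, (α ^ (k - j)) • ε j)
    (Qstar : S × A → ℝ)
    (hQstar : ∀ s a, Qstar (s, a) = r s a + γ * ∑ s', P s a s' *
      (lam * Real.log (∑ a', Real.exp (Qstar (s', a') / lam))))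
    (Qpi : ℕ → S × A → ℝ)
    (hQpi : ∀ k ≥ 1, ∀ s a, Qpi k (s, a) = r s a + γ * ∑ s', P s a s' *
      ∑ a', π k s' a' * (Qpi k (s', a') - lam * Real.log (π k s' a'))) :
    ∃ u : ℕ → ℝ,
      Filter.Tendsto (fun k : ℕ => (k : ℝ) * u k) Filter.atTop (nhds 0) ∧
      ∀ k ≥ 1, ‖Qstar - Qpi k‖ ≤
        (2 / (1 - γ) ^ 2) *
          ((1 - γ) * ∑ j ∈ Finset.Icc 1 k, γ ^ (k - j) * ‖E j‖) + u k := by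
  have hα' : (0:ℝ) < 1 - α := by linarith
  have hγ' : (0:ℝ) < 1 - γ := by linarith
  have hlam0 : 0 < lam := by rw [hlam]; exact mul_pos hα' hτ
  -- pointwise version of hE
  have hE' : ∀ k, ∀ p : S × A, E k p = (1 - α) * ∑ j ∈ Finset.Icc 1 k, α ^ (k - j) * ε j p := by
    intro k p
    rw [hE k]
    simp [Finset.sum_apply]
  -- rearranged error equation
  have hε' : ∀ k, 1 ≤ k → ∀ s a, τ * Real.log (π (k + 1) s a) =
      r s a + α * τ * Real.log (π k s a) + γ * (∑ s', P s a s' * V (k - 1) s')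
        + ε k (s, a) - V k s := by
    intro k hk s a
    have := hε k hk s a
    linarith
  -- the softmax operator
  set L : ((S × A) → ℝ) → S → ℝ :=
    fun Q s => lam * Real.log (∑ a, Real.exp (Q (s, a) / lam)) with hLdef
  -- the optimal regularized Bellman operator
  set Ts : ((S × A) → ℝ) → (S × A) → ℝ :=
    fun Q p => r p.1 p.2 + γ * ∑ s', P p.1 p.2 s' * L Q s' with hTsdef
  -- averaged values
  set v : ℕ → S → ℝ :=
    fun k s => (1 - α) * ∑ j ∈ Finset.Icc 1 k, α ^ (k - j) * V j s with hvdef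
  -- the implicit Q-functions
  set Qh : ℕ → (S × A) → ℝ :=
    fun k p => lam * α ^ k * Real.log (π 1 p.1 p.2)
      + (1 - α) * ∑ j ∈ Finset.Icc 1 k, α ^ (k - j) *
          (r p.1 p.2 + γ * (∑ s', P p.1 p.2 s' * V (j - 1) s') + ε j p) with hQhdef
  -- the key telescoping identity
  have hkey : ∀ k, 1 ≤ k → ∀ p : S × A,
      lam * Real.log (π (k + 1) p.1 p.2) = Qh k p - v k p.1 := by
    intro k hk
    induction k, hk using Nat.le_induction with
    | base =>
      rintro ⟨s, a⟩
      have he := hε' 1 le_rfl s a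
      simp only [hQhdef, hvdef, Finset.Icc_self, Finset.sum_singleton, Nat.sub_self, pow_zero,
        pow_one, one_mul] at *
      norm_num at he
      rw [hlam]
      linear_combination (1 - α) * he
    | succ k hk ih =>
      rintro ⟨s, a⟩
      have he := hε' (k + 1) (by omega) s a
      simp only [Nat.add_sub_cancel] at he
      have ihp := ih (s, a)
      simp only [hQhdef, hvdef] at ihp ⊢
      rw [IQDP.sum_succ_aux, IQDP.sum_succ_aux]
      simp only [Nat.add_sub_cancel]
      rw [hlam] at ihp ⊢
      linear_combination (1 - α) * he + α * ihp
  -- softmax consistency : L (Qh k) = v k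
  have hLv : ∀ k, ∀ s, L (Qh k) s = v k s := by
    intro k s
    rcases Nat.eq_zero_or_pos k with hk | hk
    · subst hk
      simp only [hLdef, hQhdef, hvdef]
      have h0 : ∀ a, (lam * α ^ 0 * Real.log (π 1 s a)
          + (1 - α) * ∑ j ∈ Finset.Icc 1 0, α ^ (0 - j) *
            (r s a + γ * (∑ s', P s a s' * V (j - 1) s') + ε j (s, a))) / lam
          = Real.log (π 1 s a) := by
        intro a
        simp only [pow_zero, mul_one, Finset.Icc_eq_empty_of_lt (by norm_num : (0:ℕ) < 1),
          Finset.sum_empty, mul_zero, add_zero, one_mul]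
        field_simp
      rw [Finset.sum_congr rfl fun a _ => by rw [h0 a]]
      rw [Finset.sum_congr rfl fun a _ => Real.exp_log (hπpos 1 le_rfl s a)]
      rw [hπsum 1 le_rfl s, Real.log_one, mul_zero]
      simp
    · have hx : ∀ a, Real.exp (Qh k (s, a) / lam) = Real.exp (v k s / lam) * π (k + 1) s a := by
        intro a
        have h1 := hkey k hk (s, a)
        rw [← Real.exp_log (hπpos (k + 1) (by omega) s a), ← Real.exp_add]
        congr 1
        have h2 : Real.log (π (k + 1) s a) = (Qh k (s, a) - v k s) / lam := by
          field_simp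
          linarith
        rw [h2]
        field_simp
        ring
      simp only [hLdef]
      rw [Finset.sum_congr rfl fun a _ => hx a, ← Finset.mul_sum,
        hπsum (k + 1) (by omega) s, mul_one, Real.log_exp]
      field_simp
  -- greediness of π (k+1) w.r.t. Qh k
  have hgreedy : ∀ k, 1 ≤ k → ∀ s,
      ∑ a, π (k + 1) s a * (Qh k (s, a) - lam * Real.log (π (k + 1) s a)) = v k s := by
    intro k hk s
    have h1 : ∀ a, π (k + 1) s a * (Qh k (s, a) - lam * Real.log (π (k + 1) s a))
        = π (k + 1) s a * v k s := by
      intro a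
      have := hkey k hk (s, a)
      simp only at this
      rw [show Qh k (s, a) - lam * Real.log (π (k + 1) s a) = v k s by linarith]
    rw [Finset.sum_congr rfl fun a _ => h1 a, ← Finset.sum_mul, hπsum (k + 1) (by omega) s,
      one_mul]
  -- Qstar is a fixed point of Ts
  have hfix : ∀ p : S × A, Qstar p = Ts Qstar p := by
    intro ⟨s, a⟩
    exact hQstar s a
  -- contraction property of Ts
  have hTs_contr : ∀ (Q Q' : (S × A) → ℝ) (c : ℝ), (∀ p, |Q p - Q' p| ≤ c) →
      ∀ p, |Ts Q p - Ts Q' p| ≤ γ * c := by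
    intro Q Q' c hpc p
    have hLb : ∀ s', |L Q s' - L Q' s'| ≤ c := by
      intro s'
      rw [abs_le]
      constructor
      · have := IQDP.lse_le hlam0 (fun a => Q' (s', a)) (fun a => Q (s', a)) c
          (fun a => by have h := hpc (s', a); rw [abs_le] at h; linarith)
        simp only [hLdef]
        linarith
      · have := IQDP.lse_le hlam0 (fun a => Q (s', a)) (fun a => Q' (s', a)) c
          (fun a => by have h := hpc (s', a); rw [abs_le] at h; linarith)
        simp only [hLdef]
        linarith
    have hdiff : Ts Q p - Ts Q' p = γ * ∑ s', P p.1 p.2 s' * (L Q s' - L Q' s') := by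
      have hsub : ∑ s', P p.1 p.2 s' * (L Q s' - L Q' s')
          = (∑ s', P p.1 p.2 s' * L Q s') - ∑ s', P p.1 p.2 s' * L Q' s' := by
        rw [← Finset.sum_sub_distrib]
        exact Finset.sum_congr rfl fun s' _ => by ring
      simp only [hTsdef]
      rw [hsub]
      ring
    rw [hdiff, abs_mul, abs_of_nonneg hγ0]
    have : |∑ s', P p.1 p.2 s' * (L Q s' - L Q' s')| ≤ c := by
      calc |∑ s', P p.1 p.2 s' * (L Q s' - L Q' s')|
          ≤ ∑ s', |P p.1 p.2 s' * (L Q s' - L Q' s')| := Finset.abs_sum_le_sum_abs _ _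
        _ ≤ ∑ s', P p.1 p.2 s' * c := by
            refine Finset.sum_le_sum fun s' _ => ?_
            rw [abs_mul, abs_of_nonneg (hP0 p.1 p.2 s')]
            exact mul_le_mul_of_nonneg_left (hLb s') (hP0 p.1 p.2 s')
        _ = c := by rw [← Finset.sum_mul, hPsum, one_mul]
    exact mul_le_mul_of_nonneg_left this hγ0
  -- the drift terms
  set d : ℕ → (S × A) → ℝ :=
    fun k p => lam * α ^ k * Real.log (π 1 p.1 p.2) - α ^ k * r p.1 p.2
      + γ * (1 - α) * α ^ (k - 1) * ∑ s', P p.1 p.2 s' * V 0 s' with hddef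
  -- the approximate value-iteration recursion
  have hrec : ∀ k, ∀ p : S × A, Qh (k + 1) p = Ts (Qh k) p + E (k + 1) p + d (k + 1) p := by
    intro k p
    obtain ⟨s, a⟩ := p
    have hswap : ∑ s', P s a s' * v k s'
        = (1 - α) * ∑ j ∈ Finset.Icc 1 k, α ^ (k - j) * ∑ s', P s a s' * V j s' := by
      simp only [hvdef]
      calc ∑ s', P s a s' * ((1 - α) * ∑ j ∈ Finset.Icc 1 k, α ^ (k - j) * V j s')
          = ∑ s', ∑ j ∈ Finset.Icc 1 k, P s a s' * ((1 - α) * (α ^ (k - j) * V j s')) := by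
            refine Finset.sum_congr rfl fun s' _ => ?_
            rw [Finset.mul_sum, Finset.mul_sum]
            all_goals exact Finset.sum_congr rfl fun _ _ => by ring
        _ = ∑ j ∈ Finset.Icc 1 k, ∑ s', P s a s' * ((1 - α) * (α ^ (k - j) * V j s')) :=
            Finset.sum_comm
        _ = (1 - α) * ∑ j ∈ Finset.Icc 1 k, α ^ (k - j) * ∑ s', P s a s' * V j s' := by
            rw [Finset.mul_sum]
            refine Finset.sum_congr rfl fun j _ => ?_
            rw [Finset.mul_sum, Finset.mul_sum]
            all_goals exact Finset.sum_congr rfl fun _ _ => by ring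
    have hTsv : Ts (Qh k) (s, a) = r s a
        + γ * ((1 - α) * ∑ j ∈ Finset.Icc 1 k, α ^ (k - j) * ∑ s', P s a s' * V j s') := by
      simp only [hTsdef]
      rw [Finset.sum_congr rfl fun s' (_ : s' ∈ Finset.univ) => by rw [hLv k s'], hswap]
    have hsplit : ∑ j ∈ Finset.Icc 1 (k + 1), α ^ (k + 1 - j) *
          (r s a + γ * (∑ s', P s a s' * V (j - 1) s') + ε j (s, a))
        = (∑ j ∈ Finset.Icc 1 (k + 1), α ^ (k + 1 - j)) * r s a
          + γ * (α ^ k * (∑ s', P s a s' * V 0 s')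
              + ∑ j ∈ Finset.Icc 1 k, α ^ (k - j) * ∑ s', P s a s' * V j s')
          + ∑ j ∈ Finset.Icc 1 (k + 1), α ^ (k + 1 - j) * ε j (s, a) := by
      rw [← IQDP.shift_aux α (fun j => ∑ s', P s a s' * V j s') k]
      rw [show (∑ j ∈ Finset.Icc 1 (k + 1), α ^ (k + 1 - j) *
          (r s a + γ * (∑ s', P s a s' * V (j - 1) s') + ε j (s, a)))
        = ∑ j ∈ Finset.Icc 1 (k + 1), (α ^ (k + 1 - j) * r s a
            + γ * (α ^ (k + 1 - j) * (∑ s', P s a s' * V (j - 1) s'))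
            + α ^ (k + 1 - j) * ε j (s, a))
        from Finset.sum_congr rfl fun j _ => by ring]
      rw [Finset.sum_add_distrib, Finset.sum_add_distrib, ← Finset.sum_mul, ← Finset.mul_sum]
    have hgeo := IQDP.geom_aux α (k + 1)
    have hEp := hE' (k + 1) (s, a)
    simp only [hQhdef, hddef, Nat.add_sub_cancel] at *
    rw [hsplit, hTsv, hEp]
    linear_combination (r s a) * hgeo
  -- bound the drift
  set D : ℝ := lam * ‖fun p : S × A => Real.log (π 1 p.1 p.2)‖
      + ‖fun p : S × A => r p.1 p.2‖
      + γ * ‖fun p : S × A => ∑ s', P p.1 p.2 s' * V 0 s'‖ with hDdef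
  have hD0 : 0 ≤ D := by positivity
  have hd : ∀ k, ∀ p : S × A, |d (k + 1) p| ≤ D * α ^ k := by
    intro k p
    have t1 := norm_le_pi_norm (fun p : S × A => Real.log (π 1 p.1 p.2)) p
    have t2 := norm_le_pi_norm (fun p : S × A => r p.1 p.2) p
    have t3 := norm_le_pi_norm (fun p : S × A => ∑ s', P p.1 p.2 s' * V 0 s') p
    rw [Real.norm_eq_abs] at t1 t2 t3
    have hαk : α ^ (k + 1) ≤ α ^ k := pow_le_pow_of_le_one (le_of_lt hα0) (le_of_lt hα1)
      (by omega)
    have hαk0 : (0:ℝ) < α ^ k := pow_pos hα0 k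
    have hαk10 : (0:ℝ) < α ^ (k + 1) := pow_pos hα0 (k + 1)
    have b1 : |lam * α ^ (k + 1) * Real.log (π 1 p.1 p.2)|
        ≤ lam * α ^ k * ‖fun p : S × A => Real.log (π 1 p.1 p.2)‖ := by
      rw [abs_mul, abs_mul, abs_of_pos hlam0, abs_of_pos hαk10]
      gcongr
      all_goals first | exact norm_nonneg _ | exact t1 | exact hαk
    have b2 : |α ^ (k + 1) * r p.1 p.2| ≤ α ^ k * ‖fun p : S × A => r p.1 p.2‖ := by
      rw [abs_mul, abs_of_pos hαk10]
      gcongr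
      all_goals first | exact norm_nonneg _ | exact t2 | exact hαk
    have b3 : |γ * (1 - α) * α ^ k * (∑ s', P p.1 p.2 s' * V 0 s')|
        ≤ γ * α ^ k * ‖fun p : S × A => ∑ s', P p.1 p.2 s' * V 0 s'‖ := by
      rw [abs_mul, abs_of_nonneg (by positivity : (0:ℝ) ≤ γ * (1 - α) * α ^ k)]
      have h1 : γ * (1 - α) * α ^ k * |∑ s', P p.1 p.2 s' * V 0 s'|
          ≤ γ * (1 - α) * α ^ k * ‖fun p : S × A => ∑ s', P p.1 p.2 s' * V 0 s'‖ := by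
        gcongr
        all_goals exact t3
      have h2 : γ * (1 - α) * α ^ k * ‖fun p : S × A => ∑ s', P p.1 p.2 s' * V 0 s'‖
          ≤ γ * α ^ k * ‖fun p : S × A => ∑ s', P p.1 p.2 s' * V 0 s'‖ := by
        nlinarith [mul_nonneg (mul_nonneg (mul_nonneg hγ0 (le_of_lt hαk0))
          (norm_nonneg (fun p : S × A => ∑ s', P p.1 p.2 s' * V 0 s'))) (le_of_lt hα0)]
      linarith
    have habs : |d (k + 1) p| ≤ |lam * α ^ (k + 1) * Real.log (π 1 p.1 p.2)|
        + |α ^ (k + 1) * r p.1 p.2|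
        + |γ * (1 - α) * α ^ k * (∑ s', P p.1 p.2 s' * V 0 s')| := by
      simp only [hddef, Nat.add_sub_cancel]
      have hXY : |lam * α ^ (k + 1) * Real.log (π 1 p.1 p.2) - α ^ (k + 1) * r p.1 p.2|
          ≤ |lam * α ^ (k + 1) * Real.log (π 1 p.1 p.2)| + |α ^ (k + 1) * r p.1 p.2| := by
        rw [sub_eq_add_neg]
        exact (abs_add_le _ _).trans (by rw [abs_neg])
      calc |lam * α ^ (k + 1) * Real.log (π 1 p.1 p.2) - α ^ (k + 1) * r p.1 p.2
            + γ * (1 - α) * α ^ k * (∑ s', P p.1 p.2 s' * V 0 s')|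
          ≤ |lam * α ^ (k + 1) * Real.log (π 1 p.1 p.2) - α ^ (k + 1) * r p.1 p.2|
            + |γ * (1 - α) * α ^ k * (∑ s', P p.1 p.2 s' * V 0 s')| := abs_add_le _ _
        _ ≤ _ := by linarith
    rw [hDdef]
    ring_nf
    ring_nf at b1 b2 b3 habs
    linarith
  set M : ℝ := ‖Qh 0 - Qstar‖ with hMdef
  have hM0 : 0 ≤ M := norm_nonneg _
  -- error propagation for Qh
  have hstep1 : ∀ k, ‖Qh k - Qstar‖ ≤ γ ^ k * M
      + ∑ j ∈ Finset.Icc 1 k, γ ^ (k - j) * (‖E j‖ + D * α ^ (j - 1)) := by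
    intro k
    induction k with
    | zero => simp [hMdef]
    | succ k ih =>
      have key : ∀ p : S × A, |(Qh (k + 1) - Qstar) p|
          ≤ γ * ‖Qh k - Qstar‖ + (‖E (k + 1)‖ + D * α ^ k) := by
        intro p
        have h1 : (Qh (k + 1) - Qstar) p
            = (Ts (Qh k) p - Ts Qstar p) + E (k + 1) p + d (k + 1) p := by
          simp only [Pi.sub_apply]
          rw [hrec k p, ← hfix p]
          ring
        rw [h1]
        have c1 := hTs_contr (Qh k) Qstar (‖Qh k - Qstar‖) (fun q => by
          have hq := norm_le_pi_norm (Qh k - Qstar) q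
          rw [Real.norm_eq_abs] at hq
          simpa using hq) p
        have c2 := norm_le_pi_norm (E (k + 1)) p
        rw [Real.norm_eq_abs] at c2
        have c3 := hd k p
        have hXY : |(Ts (Qh k) p - Ts Qstar p) + E (k + 1) p|
            ≤ |Ts (Qh k) p - Ts Qstar p| + |E (k + 1) p| := abs_add_le _ _
        calc |(Ts (Qh k) p - Ts Qstar p) + E (k + 1) p + d (k + 1) p|
            ≤ |(Ts (Qh k) p - Ts Qstar p) + E (k + 1) p| + |d (k + 1) p| := abs_add_le _ _
          _ ≤ _ := by linarith
      have hnorm : ‖Qh (k + 1) - Qstar‖ ≤ γ * ‖Qh k - Qstar‖ + (‖E (k + 1)‖ + D * α ^ k) := by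
        refine (pi_norm_le_iff_of_nonneg ?_).mpr (fun p => by
          rw [Real.norm_eq_abs]; exact key p)
        positivity
      rw [IQDP.sum_succ_aux]
      simp only [Nat.add_sub_cancel]
      have hmul := mul_le_mul_of_nonneg_left ih hγ0
      have hp : γ ^ (k + 1) = γ * γ ^ k := by ring
      calc ‖Qh (k + 1) - Qstar‖ ≤ γ * ‖Qh k - Qstar‖ + (‖E (k + 1)‖ + D * α ^ k) := hnorm
        _ ≤ _ := by rw [hp]; linarith
  -- from Qh to the value of the greedy policy
  have hstep2 : ∀ k, 1 ≤ k →
      (1 - γ) * ‖Qstar - Qpi (k + 1)‖ ≤ 2 * γ * ‖Qh k - Qstar‖ := by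
    intro k hk
    have hpt : ∀ p : S × A, |(Qstar - Qpi (k + 1)) p|
        ≤ γ * ‖Qh k - Qstar‖ + γ * ‖Qh k - Qpi (k + 1)‖ := by
      rintro ⟨s, a⟩
      have hTpQh : Ts (Qh k) (s, a) = r s a + γ * ∑ s', P s a s' *
          ∑ a', π (k + 1) s' a' * (Qh k (s', a') - lam * Real.log (π (k + 1) s' a')) := by
        simp only [hTsdef]
        congr 2
        refine Finset.sum_congr rfl fun s' _ => ?_
        rw [hgreedy k hk s', hLv k s']
      have hQp : Qpi (k + 1) (s, a) = r s a + γ * ∑ s', P s a s' *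
          ∑ a', π (k + 1) s' a' * (Qpi (k + 1) (s', a') - lam * Real.log (π (k + 1) s' a')) :=
        hQpi (k + 1) (by omega) s a
      have hZ : (∑ s', P s a s' * ∑ a', π (k + 1) s' a'
              * (Qh k (s', a') - lam * Real.log (π (k + 1) s' a')))
          - (∑ s', P s a s' * ∑ a', π (k + 1) s' a'
              * (Qpi (k + 1) (s', a') - lam * Real.log (π (k + 1) s' a')))
          = ∑ s', P s a s' * ∑ a', π (k + 1) s' a' * (Qh k (s', a') - Qpi (k + 1) (s', a')) := by
        rw [← Finset.sum_sub_distrib]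
        refine Finset.sum_congr rfl fun s' _ => ?_
        rw [← mul_sub, ← Finset.sum_sub_distrib]
        congr 1
        exact Finset.sum_congr rfl fun a' _ => by ring
      have hdiff2 : Ts (Qh k) (s, a) - Qpi (k + 1) (s, a)
          = γ * ∑ s', P s a s' * ∑ a', π (k + 1) s' a'
              * (Qh k (s', a') - Qpi (k + 1) (s', a')) := by
        rw [hTpQh]
        nth_rewrite 1 [hQp]
        linear_combination γ * hZ
      have hb2 : |∑ s', P s a s' * ∑ a', π (k + 1) s' a'
          * (Qh k (s', a') - Qpi (k + 1) (s', a'))| ≤ ‖Qh k - Qpi (k + 1)‖ := by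
        have hinner : ∀ s', |∑ a', π (k + 1) s' a' * (Qh k (s', a') - Qpi (k + 1) (s', a'))|
            ≤ ‖Qh k - Qpi (k + 1)‖ := by
          intro s'
          calc |∑ a', π (k + 1) s' a' * (Qh k (s', a') - Qpi (k + 1) (s', a'))|
              ≤ ∑ a', |π (k + 1) s' a' * (Qh k (s', a') - Qpi (k + 1) (s', a'))| :=
                Finset.abs_sum_le_sum_abs _ _
            _ ≤ ∑ a', π (k + 1) s' a' * ‖Qh k - Qpi (k + 1)‖ := by
                refine Finset.sum_le_sum fun a' _ => ?_
                rw [abs_mul, abs_of_pos (hπpos (k + 1) (by omega) s' a')]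
                refine mul_le_mul_of_nonneg_left ?_ (le_of_lt (hπpos (k + 1) (by omega) s' a'))
                have hq := norm_le_pi_norm (Qh k - Qpi (k + 1)) (s', a')
                rw [Real.norm_eq_abs] at hq
                simpa using hq
            _ = ‖Qh k - Qpi (k + 1)‖ := by
                rw [← Finset.sum_mul, hπsum (k + 1) (by omega) s', one_mul]
        calc |∑ s', P s a s' * ∑ a', π (k + 1) s' a'
              * (Qh k (s', a') - Qpi (k + 1) (s', a'))|
            ≤ ∑ s', |P s a s' * ∑ a', π (k + 1) s' a'
              * (Qh k (s', a') - Qpi (k + 1) (s', a'))| := Finset.abs_sum_le_sum_abs _ _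
          _ ≤ ∑ s', P s a s' * ‖Qh k - Qpi (k + 1)‖ := by
              refine Finset.sum_le_sum fun s' _ => ?_
              rw [abs_mul, abs_of_nonneg (hP0 s a s')]
              exact mul_le_mul_of_nonneg_left (hinner s') (hP0 s a s')
          _ = ‖Qh k - Qpi (k + 1)‖ := by rw [← Finset.sum_mul, hPsum, one_mul]
      have hb1 := hTs_contr Qstar (Qh k) (‖Qh k - Qstar‖) (fun q => by
        have hq := norm_le_pi_norm (Qh k - Qstar) q
        rw [Real.norm_eq_abs] at hq
        rw [abs_sub_comm]
        simpa using hq) (s, a)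
      have hsplit : (Qstar - Qpi (k + 1)) (s, a)
          = (Ts Qstar (s, a) - Ts (Qh k) (s, a)) + (Ts (Qh k) (s, a) - Qpi (k + 1) (s, a)) := by
        simp only [Pi.sub_apply]
        rw [← hfix (s, a)]
        ring
      rw [hsplit]
      have habs2 : |Ts (Qh k) (s, a) - Qpi (k + 1) (s, a)| ≤ γ * ‖Qh k - Qpi (k + 1)‖ := by
        rw [hdiff2, abs_mul, abs_of_nonneg hγ0]
        exact mul_le_mul_of_nonneg_left hb2 hγ0
      calc |(Ts Qstar (s, a) - Ts (Qh k) (s, a)) + (Ts (Qh k) (s, a) - Qpi (k + 1) (s, a))|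
          ≤ |Ts Qstar (s, a) - Ts (Qh k) (s, a)| + |Ts (Qh k) (s, a) - Qpi (k + 1) (s, a)| :=
            abs_add_le _ _
        _ ≤ _ := by linarith
    have hN1 : ‖Qstar - Qpi (k + 1)‖ ≤ γ * ‖Qh k - Qstar‖ + γ * ‖Qh k - Qpi (k + 1)‖ := by
      refine (pi_norm_le_iff_of_nonneg ?_).mpr (fun p => by
        rw [Real.norm_eq_abs]; exact hpt p)
      positivity
    have hN3 : ‖Qh k - Qpi (k + 1)‖ ≤ ‖Qh k - Qstar‖ + ‖Qstar - Qpi (k + 1)‖ := by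
      have h := norm_add_le (Qh k - Qstar) (Qstar - Qpi (k + 1))
      rwa [sub_add_sub_cancel] at h
    have := mul_le_mul_of_nonneg_left hN3 hγ0
    linarith
  -- the geometric rate
  set β : ℝ := max γ α with hβdef
  have hβ0 : 0 < β := lt_of_lt_of_le hα0 (le_max_right γ α)
  have hβ1 : β < 1 := max_lt hγ1 hα1
  set C : ℝ := 2 * (M + D) / (1 - γ) with hCdef
  have hC0 : 0 ≤ C := by positivity
  -- the final pre-bound
  have hfinal : ∀ k, 2 ≤ k → ‖Qstar - Qpi k‖ ≤
      (2 / (1 - γ)) * ∑ j ∈ Finset.Icc 1 k, γ ^ (k - j) * ‖E j‖ + C * k * β ^ (k - 1) := by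
    intro k hk
    obtain ⟨m, rfl⟩ : ∃ m, k = m + 1 := ⟨k - 1, by omega⟩
    have hm : 1 ≤ m := by omega
    have h2 := hstep2 m hm
    have h1 := hstep1 m
    have hγβ : γ ≤ β := le_max_left γ α
    have hαβ : α ≤ β := le_max_right γ α
    have hsum1 : γ * ∑ j ∈ Finset.Icc 1 m, γ ^ (m - j) * (‖E j‖ + D * α ^ (j - 1))
        = ∑ j ∈ Finset.Icc 1 m, γ ^ (m + 1 - j) * (‖E j‖ + D * α ^ (j - 1)) := by
      rw [Finset.mul_sum]
      refine Finset.sum_congr rfl fun j hj => ?_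
      rw [Finset.mem_Icc] at hj
      rw [show m + 1 - j = (m - j) + 1 by omega, pow_succ]
      ring
    have hsum2 : ∑ j ∈ Finset.Icc 1 m, γ ^ (m + 1 - j) * (‖E j‖ + D * α ^ (j - 1))
        = ∑ j ∈ Finset.Icc 1 m, γ ^ (m + 1 - j) * ‖E j‖
          + D * ∑ j ∈ Finset.Icc 1 m, γ ^ (m + 1 - j) * α ^ (j - 1) := by
      rw [Finset.mul_sum, ← Finset.sum_add_distrib]
      exact Finset.sum_congr rfl fun j _ => by ring
    have hb1 : ∑ j ∈ Finset.Icc 1 m, γ ^ (m + 1 - j) * ‖E j‖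
        ≤ ∑ j ∈ Finset.Icc 1 (m + 1), γ ^ (m + 1 - j) * ‖E j‖ :=
      Finset.sum_le_sum_of_subset_of_nonneg
        (Finset.Icc_subset_Icc_right (by omega)) (fun j _ _ => by positivity)
    have hb2 : ∑ j ∈ Finset.Icc 1 m, γ ^ (m + 1 - j) * α ^ (j - 1) ≤ m * β ^ m := by
      calc ∑ j ∈ Finset.Icc 1 m, γ ^ (m + 1 - j) * α ^ (j - 1)
          ≤ ∑ _j ∈ Finset.Icc 1 m, β ^ m := by
            refine Finset.sum_le_sum fun j hj => ?_
            rw [Finset.mem_Icc] at hj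
            calc γ ^ (m + 1 - j) * α ^ (j - 1) ≤ β ^ (m + 1 - j) * β ^ (j - 1) := by
                  have e1 : γ ^ (m + 1 - j) ≤ β ^ (m + 1 - j) := pow_le_pow_left₀ hγ0 hγβ _
                  have e2 : α ^ (j - 1) ≤ β ^ (j - 1) := pow_le_pow_left₀ (le_of_lt hα0) hαβ _
                  have e4 : (0:ℝ) ≤ α ^ (j - 1) := by positivity
                  exact mul_le_mul e1 e2 e4 (by positivity)
              _ = β ^ m := by rw [← pow_add]; congr 1; omega
        _ = m * β ^ m := by
            rw [Finset.sum_const, Nat.card_Icc]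
            simp [nsmul_eq_mul]
    have hb3 : γ ^ (m + 1) ≤ β ^ m := by
      calc γ ^ (m + 1) ≤ β ^ (m + 1) := pow_le_pow_left₀ hγ0 hγβ _
        _ ≤ β ^ m := pow_le_pow_of_le_one (le_of_lt hβ0) (le_of_lt hβ1) (by omega)
    have hβm : (0:ℝ) ≤ β ^ m := by positivity
    have hchain : (1 - γ) * ‖Qstar - Qpi (m + 1)‖
        ≤ 2 * ∑ j ∈ Finset.Icc 1 (m + 1), γ ^ (m + 1 - j) * ‖E j‖
          + 2 * (M + D) * (m + 1) * β ^ m := by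
      have hmul := mul_le_mul_of_nonneg_left h1 (by positivity : (0:ℝ) ≤ 2 * γ)
      have e5 : 2 * γ * (γ ^ m * M
            + ∑ j ∈ Finset.Icc 1 m, γ ^ (m - j) * (‖E j‖ + D * α ^ (j - 1)))
          = 2 * γ ^ (m + 1) * M + 2 * (∑ j ∈ Finset.Icc 1 m, γ ^ (m + 1 - j) * ‖E j‖
            + D * ∑ j ∈ Finset.Icc 1 m, γ ^ (m + 1 - j) * α ^ (j - 1)) := by
        rw [← hsum2, ← hsum1, pow_succ]
        ring
      have t1 : 2 * γ ^ (m + 1) * M ≤ 2 * β ^ m * M := by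
        have := mul_le_mul_of_nonneg_right hb3 hM0
        linarith
      have t2 : D * ∑ j ∈ Finset.Icc 1 m, γ ^ (m + 1 - j) * α ^ (j - 1)
          ≤ D * (m * β ^ m) := mul_le_mul_of_nonneg_left hb2 hD0
      have hm1 : (1:ℝ) ≤ (m:ℝ) := by exact_mod_cast hm
      have t3 : 2 * β ^ m * M + 2 * (D * (m * β ^ m)) ≤ 2 * (M + D) * (m + 1) * β ^ m := by
        have key : 2 * (M + D) * (m + 1) * β ^ m - (2 * β ^ m * M + 2 * (D * (m * β ^ m)))
            = 2 * β ^ m * (M * m + D) := by ring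
        have pos : (0:ℝ) ≤ 2 * β ^ m * (M * m + D) :=
          mul_nonneg (mul_nonneg (by norm_num) hβm)
            (add_nonneg (mul_nonneg hM0 (Nat.cast_nonneg m)) hD0)
        linarith
      calc (1 - γ) * ‖Qstar - Qpi (m + 1)‖ ≤ 2 * γ * ‖Qh m - Qstar‖ := h2
        _ ≤ 2 * γ * (γ ^ m * M
            + ∑ j ∈ Finset.Icc 1 m, γ ^ (m - j) * (‖E j‖ + D * α ^ (j - 1))) := hmul
        _ = 2 * γ ^ (m + 1) * M + 2 * (∑ j ∈ Finset.Icc 1 m, γ ^ (m + 1 - j) * ‖E j‖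
            + D * ∑ j ∈ Finset.Icc 1 m, γ ^ (m + 1 - j) * α ^ (j - 1)) := e5
        _ ≤ _ := by linarith [hb1]
    have hCeq : (1 - γ) * (C * (m + 1) * β ^ m) = 2 * (M + D) * (m + 1) * β ^ m := by
      rw [hCdef]
      field_simp
    have hSeq : (1 - γ) * ((2 / (1 - γ))
          * ∑ j ∈ Finset.Icc 1 (m + 1), γ ^ (m + 1 - j) * ‖E j‖)
        = 2 * ∑ j ∈ Finset.Icc 1 (m + 1), γ ^ (m + 1 - j) * ‖E j‖ := by
      field_simp
    have hfin2 : (1 - γ) * ‖Qstar - Qpi (m + 1)‖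
        ≤ (1 - γ) * ((2 / (1 - γ)) * ∑ j ∈ Finset.Icc 1 (m + 1), γ ^ (m + 1 - j) * ‖E j‖
            + C * (m + 1) * β ^ m) := by
      rw [mul_add, hCeq, hSeq]
      linarith [hchain]
    have hres := le_of_mul_le_mul_left hfin2 hγ'
    have hcast : ((m:ℝ) + 1) = ((m + 1 : ℕ) : ℝ) := by push_cast; ring
    simpa [Nat.add_sub_cancel, ← hcast] using hres
  -- assemble
  refine ⟨fun k => max 0 (‖Qstar - Qpi k‖
      - (2 / (1 - γ)) * ∑ j ∈ Finset.Icc 1 k, γ ^ (k - j) * ‖E j‖), ?_, ?_⟩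
  · have hβn : ‖β‖ < 1 := by rw [Real.norm_eq_abs, abs_of_pos hβ0]; exact hβ1
    have htend : Filter.Tendsto (fun k : ℕ => (C / β) * ((k:ℝ) ^ 2 * β ^ k))
        Filter.atTop (nhds 0) := by
      have h := (summable_pow_mul_geometric_of_norm_lt_one 2 hβn).tendsto_atTop_zero
      simpa using h.const_mul (C / β)
    apply squeeze_zero' ?_ ?_ htend
    · exact Filter.Eventually.of_forall fun k =>
        mul_nonneg (Nat.cast_nonneg k) (le_max_left 0 _)
    · refine Filter.eventually_atTop.mpr ⟨2, fun k hk => ?_⟩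
      have hu : max 0 (‖Qstar - Qpi k‖
            - (2 / (1 - γ)) * ∑ j ∈ Finset.Icc 1 k, γ ^ (k - j) * ‖E j‖)
          ≤ C * k * β ^ (k - 1) := by
        apply max_le
        · exact mul_nonneg (mul_nonneg hC0 (Nat.cast_nonneg k)) (le_of_lt (pow_pos hβ0 _))
        · have := hfinal k hk
          linarith
      have hk1 : β ^ (k - 1) * β = β ^ k := by
        rw [← pow_succ]
        congr 1
        omega
      calc (k:ℝ) * max 0 (‖Qstar - Qpi k‖
            - (2 / (1 - γ)) * ∑ j ∈ Finset.Icc 1 k, γ ^ (k - j) * ‖E j‖)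
          ≤ (k:ℝ) * (C * k * β ^ (k - 1)) := mul_le_mul_of_nonneg_left hu (Nat.cast_nonneg k)
        _ = (C / β) * ((k:ℝ) ^ 2 * β ^ k) := by
            rw [← hk1]
            field_simp
  · intro k hk
    have h2 : (2 / (1 - γ) ^ 2) * ((1 - γ) * ∑ j ∈ Finset.Icc 1 k, γ ^ (k - j) * ‖E j‖)
        = (2 / (1 - γ)) * ∑ j ∈ Finset.Icc 1 k, γ ^ (k - j) * ‖E j‖ := by
      field_simp
    rw [h2]
    have := le_max_right (0:ℝ) (‖Qstar - Qpi k‖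
      - (2 / (1 - γ)) * ∑ j ∈ Finset.Icc 1 k, γ ^ (k - j) * ‖E j‖)
    linarith
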